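/- Assume the formal mapping H = (F,G) sends M into M'. If Jac H ≢ 0, then det(∂/∂z (F(z,Q(z,χ,τ)))) ≢ 0, where F(z,Q(z,χ,τ)) is the ℂ^n-valued formal power series in (z,χ,τ) obtained by substitution and the determinant is that of its n×n Jacobian matrix with respect to z. -/

import Mathlib

open MvPowerSeries

noncomputable section

namespace Paper

variable {σ τ : Type*}

/-- Total degree `|α|` of a multi-index. -/
def msize (α : σ →₀ ℕ) : ℕ := α.sum fun _ k => k

/-- Multi-index factorial `α!`. -/
def mfact (β : σ →₀ ℕ) : ℕ := β.prod fun _ k => k.factorial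

/-- A formal power series is convergent if its coefficients satisfy a Cauchy-type estimate
`‖f_α‖ ≤ C r^{-|α|}`. -/
def IsConv (f : MvPowerSeries σ ℂ) : Prop :=
  ∃ C r : ℝ, 0 < C ∧ 0 < r ∧
    ∀ α : σ →₀ ℕ, ‖MvPowerSeries.coeff α f‖ ≤ C * r⁻¹ ^ msize α

/-- Coefficientwise complex conjugation `f̄`. -/
def sconj (f : MvPowerSeries σ ℂ) : MvPowerSeries σ ℂ :=
  fun α => starRingEnd ℂ (MvPowerSeries.coeff α f)

/-- Iterated partial derivative `∂^β f`. -/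
def dpow (β : σ →₀ ℕ) (f : MvPowerSeries σ ℂ) : MvPowerSeries σ ℂ :=
  fun α => (((β.prod fun i k => (α i + k).choose k * k.factorial) : ℕ) : ℂ) *
    MvPowerSeries.coeff (α + β) f

/-- First-order partial derivative in the direction `i`. -/
def pd (i : σ) (f : MvPowerSeries σ ℂ) : MvPowerSeries σ ℂ :=
  dpow (Finsupp.single i 1) f

/-- Apply `∂^β`, then keep only the variables in the range of `e` (an injection),
setting all the others equal to `0`. -/
def dAt0 (e : σ → τ) (β : τ →₀ ℕ) (f : MvPowerSeries τ ℂ) : MvPowerSeries σ ℂ :=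
  fun γ => MvPowerSeries.coeff (Finsupp.mapDomain e γ) (dpow β f)

/-- Substitution of the power series `a s` (all assumed to have vanishing constant term)
for the variables of `f`. -/
def substC [Fintype σ] [DecidableEq σ] (a : σ → MvPowerSeries τ ℂ) (f : MvPowerSeries σ ℂ) :
    MvPowerSeries τ ℂ :=
  fun γ => ∑ α ∈ Finset.Iic (Finsupp.equivFunOnFinite.symm fun _ : σ => msize γ),
    MvPowerSeries.coeff α f * MvPowerSeries.coeff γ (∏ s, (a s) ^ (α s))

/-- Renaming of variables along an injection `e`. -/
def inject [Fintype σ] [DecidableEq σ] (e : σ → τ) (f : MvPowerSeries σ ℂ) :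
    MvPowerSeries τ ℂ :=
  substC (fun s => MvPowerSeries.X (e s)) f

/-- The Jacobian determinant of a formal self-mapping. -/
def jacDet {ι : Type*} [Fintype ι] [DecidableEq ι] (h : ι → MvPowerSeries ι ℂ) :
    MvPowerSeries ι ℂ :=
  (Matrix.of fun k l => pd l (h k)).det

/-- The sum of a (convergent) power series at a point. -/
def evalAt [Fintype σ] (f : MvPowerSeries σ ℂ) (x : σ → ℂ) : ℂ :=
  ∑' α : σ →₀ ℕ, MvPowerSeries.coeff α f * ∏ i, x i ^ α i

/-- The variables `(z, χ, τ) ∈ ℂ^n × ℂ^n × ℂ^d`. -/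
abbrev W3 (n d : ℕ) : Type := Fin n ⊕ (Fin n ⊕ Fin d)

variable {n d : ℕ}

/-- `Q` is a convergent defining series, in normal coordinates, of a germ at `0` of a
real-analytic generic submanifold of codimension `d` in `ℂ^{n+d}`:  it is convergent,
satisfies the normality conditions `Q(0,χ,τ) = τ`, `Q(z,0,τ) = τ` and the reality condition
`Q(z,χ,Q̄(χ,z,τ)) = τ`. -/
structure IsDefSeries (Q : Fin d → MvPowerSeries (W3 n d) ℂ) : Prop where
  conv : ∀ c, IsConv (Q c)
  normal1 : ∀ c, dAt0 (Sum.inr : Fin n ⊕ Fin d → W3 n d) 0 (Q c)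
      = MvPowerSeries.X (Sum.inr c)
  normal2 : ∀ c, dAt0 (Sum.map (id : Fin n → Fin n) (Sum.inr : Fin d → Fin n ⊕ Fin d)) 0 (Q c)
      = MvPowerSeries.X (Sum.inr c)
  reality : ∀ c, substC (fun v : W3 n d => match v with
      | Sum.inl i => MvPowerSeries.X (Sum.inl i)
      | Sum.inr (Sum.inl i) => MvPowerSeries.X (Sum.inr (Sum.inl i))
      | Sum.inr (Sum.inr c') => substC (fun w : W3 n d => match w with
          | Sum.inl i => MvPowerSeries.X (Sum.inr (Sum.inl i))
          | Sum.inr (Sum.inl i) => MvPowerSeries.X (Sum.inl i)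
          | Sum.inr (Sum.inr c'') => MvPowerSeries.X (Sum.inr (Sum.inr c'')))
          (sconj (Q c'))) (Q c) = MvPowerSeries.X (Sum.inr (Sum.inr c))

/-- Composition `f(z, Q(z,χ,τ))`, a series in the variables `(z,χ,τ)`. -/
def compQ (Q : Fin d → MvPowerSeries (W3 n d) ℂ) (f : MvPowerSeries (Fin n ⊕ Fin d) ℂ) :
    MvPowerSeries (W3 n d) ℂ :=
  substC (fun w : Fin n ⊕ Fin d => match w with
    | Sum.inl i => MvPowerSeries.X (Sum.inl i)
    | Sum.inr c => Q c) f

/-- The components of `H̄(χ,τ)`, viewed as series in the variables `(z,χ,τ)`. -/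
def barSub (H : Fin n ⊕ Fin d → MvPowerSeries (Fin n ⊕ Fin d) ℂ) (v : Fin n ⊕ Fin d) :
    MvPowerSeries (W3 n d) ℂ :=
  inject (Sum.inr : Fin n ⊕ Fin d → W3 n d) (sconj (H v))

/-- `H` sends `M` into `M'`:  `Q'(F(z,Q(z,χ,τ)), H̄(χ,τ)) = G(z,Q(z,χ,τ))`. -/
def Sends (Q Q' : Fin d → MvPowerSeries (W3 n d) ℂ)
    (H : Fin n ⊕ Fin d → MvPowerSeries (Fin n ⊕ Fin d) ℂ) : Prop :=
  ∀ r, substC (fun v : W3 n d => match v with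
      | Sum.inl i => compQ Q (H (Sum.inl i))
      | Sum.inr v' => barSub H v') (Q' r)
    = compQ Q (H (Sum.inr r))

/-- The Taylor coefficient `Q_α(χ,τ)` of a series `Q(z,χ,τ)` with respect to `z^α`. -/
def coeffZ (α : Fin n →₀ ℕ) (f : MvPowerSeries (W3 n d) ℂ) :
    MvPowerSeries (Fin n ⊕ Fin d) ℂ :=
  fun γ => MvPowerSeries.coeff
    (Finsupp.mapDomain Sum.inl α + Finsupp.mapDomain Sum.inr γ) f

/-- Holomorphic nondegeneracy at `0`, via Stanton's criterion:  there are multi-indices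
`α^1,…,α^n` and components `r_1,…,r_n` such that `det (∂Q^{r_k}_{α^k}/∂χ_l) ≢ 0`. -/
def HolNondeg (Q : Fin d → MvPowerSeries (W3 n d) ℂ) : Prop :=
  ∃ (A : Fin n → (Fin n →₀ ℕ)) (rr : Fin n → Fin d),
    (Matrix.of fun k l : Fin n => pd (Sum.inl l) (coeffZ (A k) (Q (rr k)))).det ≠ 0

/-- The reflection function `R(z',χ,τ) = Q'(z', H̄(χ,τ))` (components);  the ambient
variables `W3 n d` are read as `(z', (χ, τ))`. -/
def Refl (Q' : Fin d → MvPowerSeries (W3 n d) ℂ)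
    (H : Fin n ⊕ Fin d → MvPowerSeries (Fin n ⊕ Fin d) ℂ) (r : Fin d) :
    MvPowerSeries (W3 n d) ℂ :=
  substC (fun v : W3 n d => match v with
    | Sum.inl i => MvPowerSeries.X (Sum.inl i)
    | Sum.inr v' => barSub H v') (Q' r)

/-- Variables `(z^1, χ^1, z^2, χ^2, …)` (j blocks of size n, block `2k` is `z^{k+1}` and
block `2k+1` is `χ^{k+1}`) together with `t ∈ ℂ^d`. -/
abbrev SVar (n d j : ℕ) : Type := (Fin j × Fin n) ⊕ Fin d

/-- The Segre set mappings `U_j`. -/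
def Useg (Q : Fin d → MvPowerSeries (W3 n d) ℂ) :
    (j : ℕ) → Fin d → MvPowerSeries (SVar n d j) ℂ
  | 0 => fun c => MvPowerSeries.X (Sum.inr c)
  | 1 => fun c => MvPowerSeries.X (Sum.inr c)
  | m + 2 => fun c =>
      substC (fun v : SVar n d (m + 1) => match v with
        | Sum.inl (k, a) => MvPowerSeries.X (Sum.inl (Fin.castSucc k, a))
        | Sum.inr c' => substC (fun w : W3 n d => match w with
            | Sum.inl a => MvPowerSeries.X (Sum.inl (⟨m, by omega⟩, a))
            | Sum.inr (Sum.inl a) => MvPowerSeries.X (Sum.inl (⟨m + 1, by omega⟩, a))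
            | Sum.inr (Sum.inr c'') => MvPowerSeries.X (Sum.inr c''))
            (if (m + 2) % 2 = 0 then Q c' else sconj (Q c')))
        (Useg Q (m + 1) c)

/-- The Segre set mappings `V_j = (z^1, U_j)`. -/
def Vseg (Q : Fin d → MvPowerSeries (W3 n d) ℂ) (j : ℕ) :
    Fin n ⊕ Fin d → MvPowerSeries (SVar n d j) ℂ :=
  fun c => match c with
  | Sum.inl i => if h : 0 < j then MvPowerSeries.X (Sum.inl (⟨0, h⟩, i)) else 0
  | Sum.inr c' => Useg Q j c'

/-- Minimality of `M` at `0`, expressed through the Segre mapping of order `2(d+1)`: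
there is a sequence of points `p_k → 0` at which `V_{2(d+1)}(p_k;0) = 0` and the Jacobian
matrix of `p ↦ V_{2(d+1)}(p;0)` has rank `n+d`. -/
def Minimal (Q : Fin d → MvPowerSeries (W3 n d) ℂ) : Prop :=
  ∃ p : ℕ → ((Fin (2 * (d + 1)) × Fin n) → ℂ),
    Filter.Tendsto p Filter.atTop (nhds 0) ∧
    ∀ k, (∀ c, evalAt (Vseg Q (2 * (d + 1)) c) (Sum.elim (p k) 0) = 0) ∧
      (Matrix.of fun (c : Fin n ⊕ Fin d) (v : Fin (2 * (d + 1)) × Fin n) =>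
        evalAt (pd (Sum.inl v) (Vseg Q (2 * (d + 1)) c)) (Sum.elim (p k) 0)).rank = n + d

/-- Minimality at `0` for a hypersurface in normal coordinates: `Q(z,χ,0) ≢ 0`. -/
def MinimalHyp (Q : Fin 1 → MvPowerSeries (W3 n 1) ℂ) : Prop :=
  dAt0 (Sum.map (id : Fin n → Fin n) (Sum.inl : Fin n → Fin n ⊕ Fin 1)) 0 (Q 0) ≠ 0

/-- `M'` contains no (nonconstant) formal holomorphic curve through `0`:  the only formal
curve `γ = (c, g)` with `γ(0) = 0` and `g(t) = Q'(c(t), c̄(s), ḡ(s))` is the constant one. -/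
def NoFormalCurve (Q' : Fin 1 → MvPowerSeries (W3 n 1) ℂ) : Prop :=
  ∀ (c : Fin n → MvPowerSeries Unit ℂ) (g : MvPowerSeries Unit ℂ),
    (∀ i, MvPowerSeries.constantCoeff (c i) = 0) →
    MvPowerSeries.constantCoeff g = 0 →
    inject (Sum.inl : Unit → Unit ⊕ Unit) g =
      substC (fun v : W3 n 1 => match v with
        | Sum.inl i => inject (Sum.inl : Unit → Unit ⊕ Unit) (c i)
        | Sum.inr (Sum.inl i) => inject (Sum.inr : Unit → Unit ⊕ Unit) (sconj (c i))
        | Sum.inr (Sum.inr _) => inject (Sum.inr : Unit → Unit ⊕ Unit) (sconj g)) (Q' 0) →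
    (∀ i, c i = 0) ∧ g = 0

/-- The determinant `det ∂_z(F(z,Q(z,χ,τ)))`, a series in `(z,χ,τ)`. -/
def Dser (Q : Fin d → MvPowerSeries (W3 n d) ℂ)
    (H : Fin n ⊕ Fin d → MvPowerSeries (Fin n ⊕ Fin d) ℂ) : MvPowerSeries (W3 n d) ℂ :=
  (Matrix.of fun i l : Fin n => pd (Sum.inl l) (compQ Q (H (Sum.inl i)))).det

/-- `∂^η_z ∂^δ_τ|_{(z,τ)=(0,0)}`, a series in `χ`. -/
def dZT0 (η : Fin n →₀ ℕ) (δ : Fin d →₀ ℕ) (f : MvPowerSeries (W3 n d) ℂ) :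
    MvPowerSeries (Fin n) ℂ :=
  dAt0 (fun i : Fin n => Sum.inr (Sum.inl i))
    (Finsupp.mapDomain Sum.inl η + Finsupp.mapDomain (fun c => Sum.inr (Sum.inr c)) δ) f

/-- `∂^β_τ|_{τ=0}` of a series in `(χ,τ)`, a series in `χ`. -/
def dTau0 (β : Fin d →₀ ℕ) (f : MvPowerSeries (Fin n ⊕ Fin d) ℂ) : MvPowerSeries (Fin n) ℂ :=
  dAt0 (Sum.inl : Fin n → Fin n ⊕ Fin d) (Finsupp.mapDomain Sum.inr β) f

/-- `Q'_α(H̄(χ,τ))` (r-th component), a series in `(χ,τ)`. -/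
def QpaH (Q' : Fin d → MvPowerSeries (W3 n d) ℂ)
    (H : Fin n ⊕ Fin d → MvPowerSeries (Fin n ⊕ Fin d) ℂ) (α : Fin n →₀ ℕ) (r : Fin d) :
    MvPowerSeries (Fin n ⊕ Fin d) ℂ :=
  substC (fun v => sconj (H v)) (coeffZ α (Q' r))

/-- `F(V_j(z^1,χ^2,z^2,…;0))`, embedded as a series on the blocks `1,…,j` of
`(χ^1,z^1,χ^2,z^2,…)` (j+1 blocks), with `t = 0`. -/
def FVsetZ (Q : Fin d → MvPowerSeries (W3 n d) ℂ)
    (H : Fin n ⊕ Fin d → MvPowerSeries (Fin n ⊕ Fin d) ℂ) (j : ℕ) (i : Fin n) :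
    MvPowerSeries (SVar n d (j + 1)) ℂ :=
  substC (fun v : SVar n d j => match v with
    | Sum.inl (k, a) => MvPowerSeries.X (Sum.inl (Fin.succ k, a))
    | Sum.inr _ => 0)
    (substC (Vseg Q j) (H (Sum.inl i)))

/-- `H̄(V̄_{j+1}(χ^1,z^1,χ^2,z^2,…;t))` (components). -/
def HbarV (Q : Fin d → MvPowerSeries (W3 n d) ℂ)
    (H : Fin n ⊕ Fin d → MvPowerSeries (Fin n ⊕ Fin d) ℂ) (j : ℕ) (v : Fin n ⊕ Fin d) :
    MvPowerSeries (SVar n d (j + 1)) ℂ :=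
  substC (fun w : Fin n ⊕ Fin d => sconj (Vseg Q (j + 1) w)) (sconj (H v))

/-- `(∂^α_{z'} Q'^r)(F(V_j(z^1,χ^2,…;0)), H̄(V̄_{j+1}(χ^1,z^1,χ^2,…;t)))`. -/
def Eexpr (Q Q' : Fin d → MvPowerSeries (W3 n d) ℂ)
    (H : Fin n ⊕ Fin d → MvPowerSeries (Fin n ⊕ Fin d) ℂ) (j : ℕ)
    (α : Fin n →₀ ℕ) (r : Fin d) : MvPowerSeries (SVar n d (j + 1)) ℂ :=
  substC (fun v : W3 n d => match v with
    | Sum.inl i => FVsetZ Q H j i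
    | Sum.inr v' => HbarV Q H j v')
    (dpow (Finsupp.mapDomain Sum.inl α) (Q' r))

/-- The substitution `z ↦ z^1`, `χ ↦ χ^1`, `τ ↦ Ū_{j+1}(χ^1,z^1,χ^2,…;t)`, where the blocks
of `SVar n d (j+1)` are read as `(χ^1, z^1, χ^2, z^2, …)`. -/
def tauSubst (Q : Fin d → MvPowerSeries (W3 n d) ℂ) (j : ℕ) (hj : 1 ≤ j) :
    W3 n d → MvPowerSeries (SVar n d (j + 1)) ℂ :=
  fun v => match v with
  | Sum.inl i => MvPowerSeries.X (Sum.inl (⟨1, by omega⟩, i))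
  | Sum.inr (Sum.inl i) => MvPowerSeries.X (Sum.inl (⟨0, by omega⟩, i))
  | Sum.inr (Sum.inr c) => sconj (Useg Q (j + 1) c)

/-- `Φ_j = det(∂_{z^1}(F(z^1,Q(z^1,χ^1,τ))))|_{τ = Ū_{j+1}(χ^1,z^1,χ^2,…;t)}`. -/
def PhiJ (Q : Fin d → MvPowerSeries (W3 n d) ℂ)
    (H : Fin n ⊕ Fin d → MvPowerSeries (Fin n ⊕ Fin d) ℂ) (j : ℕ) (hj : 1 ≤ j) :
    MvPowerSeries (SVar n d (j + 1)) ℂ :=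
  substC (tauSubst Q j hj) (Dser Q H)

/-- `(∂^η_{z^1} H^{(r)}(z^1,Q(z^1,χ^1,τ)))|_{τ = Ū_{j+1}(χ^1,z^1,χ^2,…;t)}` (component `c`
of `H^{(r)} = (F, G^r)`). -/
def PsiJ (Q : Fin d → MvPowerSeries (W3 n d) ℂ)
    (H : Fin n ⊕ Fin d → MvPowerSeries (Fin n ⊕ Fin d) ℂ) (j : ℕ) (hj : 1 ≤ j)
    (c : Fin n ⊕ Unit) (r : Fin d) (η : Fin n →₀ ℕ) :
    MvPowerSeries (SVar n d (j + 1)) ℂ :=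
  substC (tauSubst Q j hj)
    (dpow (Finsupp.mapDomain Sum.inl η)
      (compQ Q (H (Sum.elim Sum.inl (fun _ => Sum.inr r) c))))


/-! ### Auxiliary infrastructure -/

section Aux

open Finsupp

theorem msize_add (a b : σ →₀ ℕ) : msize (a + b) = msize a + msize b := by
  classical
  simpa [msize] using Finsupp.sum_add_index' (h := fun (_ : σ) (k : ℕ) => k)
    (fun _ => rfl) (fun _ _ _ => rfl)

theorem apply_le_msize (γ : σ →₀ ℕ) (s : σ) : γ s ≤ msize γ := by
  classical
  by_cases h : γ s = 0
  · simp [h]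
  · exact Finset.single_le_sum (f := fun t => γ t) (fun _ _ => Nat.zero_le _)
      (Finsupp.mem_support_iff.2 h)

theorem one_le_msize {γ : σ →₀ ℕ} (h : γ ≠ 0) : 1 ≤ msize γ := by
  classical
  obtain ⟨s, hs⟩ : ∃ s, γ s ≠ 0 := by
    by_contra hc
    push_neg at hc
    exact h (Finsupp.ext fun s => hc s)
  exact le_trans (Nat.one_le_iff_ne_zero.2 hs) (apply_le_msize γ s)

theorem msize_mapDomain {e : σ → τ} (γ : σ →₀ ℕ) : msize (Finsupp.mapDomain e γ) = msize γ := by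
  classical
  simpa [msize] using Finsupp.sum_mapDomain_index (f := e) (s := γ)
    (h := fun (_ : τ) (k : ℕ) => k) (fun _ => rfl) (fun _ _ _ => rfl)

/-- The constant multi-index with all entries equal to `m`. -/
def cf (m : ℕ) [Fintype σ] : σ →₀ ℕ := Finsupp.equivFunOnFinite.symm fun _ : σ => m

@[simp] theorem cf_apply [Fintype σ] (m : ℕ) (s : σ) : (cf m : σ →₀ ℕ) s = m := rfl

theorem mem_Iic_cf [Fintype σ] [DecidableEq σ] {α : σ →₀ ℕ} {m : ℕ} :
    α ∈ Finset.Iic (cf (σ := σ) m) ↔ ∀ s, α s ≤ m := by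
  simp [Finset.mem_Iic, Finsupp.le_def]

theorem coeff_pd (v : σ) (f : MvPowerSeries σ ℂ) (γ : σ →₀ ℕ) :
    MvPowerSeries.coeff γ (pd v f) =
      ((γ v : ℂ) + 1) * MvPowerSeries.coeff (γ + Finsupp.single v 1) f := by
  classical
  show (((Finsupp.single v 1).prod fun i k => (γ i + k).choose k * k.factorial : ℕ) : ℂ) * _ = _
  rw [Finsupp.prod_single_index (by simp)]
  push_cast [Nat.choose_one_right, Nat.factorial_one]
  ring_nf

theorem dpow_zero_eq (f : MvPowerSeries σ ℂ) : dpow 0 f = f := by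
  ext γ
  show ((Finsupp.prod 0 fun i k => (γ i + k).choose k * k.factorial : ℕ) : ℂ) * _ = _
  simp [Finsupp.prod_zero_index]

theorem pd_add (v : σ) (f g : MvPowerSeries σ ℂ) : pd v (f + g) = pd v f + pd v g := by
  ext γ
  simp only [map_add, coeff_pd]
  ring

theorem pd_zero (v : σ) : pd v (0 : MvPowerSeries σ ℂ) = 0 := by
  ext γ
  simp [coeff_pd]

theorem pd_smul (v : σ) (c : ℂ) (f : MvPowerSeries σ ℂ) : pd v (c • f) = c • pd v f := by
  ext γ
  simp only [LinearMap.map_smul, coeff_pd, smul_eq_mul]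
  ring

/-- `pd` as an additive monoid hom. -/
def pdAdd (v : σ) : MvPowerSeries σ ℂ →+ MvPowerSeries σ ℂ where
  toFun := pd v
  map_zero' := pd_zero v
  map_add' := pd_add v

theorem pd_sum (v : σ) {ι : Type*} (S : Finset ι) (f : ι → MvPowerSeries σ ℂ) :
    pd v (∑ i ∈ S, f i) = ∑ i ∈ S, pd v (f i) :=
  map_sum (pdAdd v) f S

theorem pd_monomial (v : σ) (β : σ →₀ ℕ) (c : ℂ) :
    pd v (MvPowerSeries.monomial β c) =
      MvPowerSeries.monomial (β - Finsupp.single v 1) ((β v : ℂ) * c) := by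
  classical
  ext γ
  rw [coeff_pd, MvPowerSeries.coeff_monomial, MvPowerSeries.coeff_monomial]
  by_cases hβ : β v = 0
  · have h1 : γ + Finsupp.single v 1 ≠ β := by
      intro h
      have := congrArg (fun δ => δ v) h
      simp [hβ] at this
    simp [h1, hβ]
  · by_cases h2 : γ = β - Finsupp.single v 1
    · have hle : Finsupp.single v 1 ≤ β := by
        rw [Finsupp.single_le_iff]
        omega
      have h1 : γ + Finsupp.single v 1 = β := by
        rw [h2]
        exact tsub_add_cancel_of_le hle
      have hγv : γ v = β v - 1 := by
        rw [h2]; simp [Finsupp.tsub_apply]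
      rw [if_pos h1, if_pos h2, hγv]
      have hc : ((β v - 1 : ℕ) : ℂ) + 1 = (β v : ℂ) := by
        have h3 : (β v - 1) + 1 = β v := by omega
        exact_mod_cast congrArg (fun k : ℕ => (k : ℂ)) h3
      rw [hc]
    · have h1 : γ + Finsupp.single v 1 ≠ β := by
        intro h
        apply h2
        rw [← h]; simp
      simp [h1, h2]

theorem pd_one (v : σ) : pd v (1 : MvPowerSeries σ ℂ) = 0 := by
  have := pd_monomial v (0 : σ →₀ ℕ) (1 : ℂ)
  simpa [MvPowerSeries.monomial_zero_one] using this

end Aux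

section Aux2

open Finsupp

theorem coeff_zero_sconj (g : MvPowerSeries σ ℂ) :
    MvPowerSeries.constantCoeff (sconj g) =
      starRingEnd ℂ (MvPowerSeries.constantCoeff g) := rfl

theorem coeff_pow_zero_of_lt {g : MvPowerSeries σ ℂ}
    (h0 : MvPowerSeries.constantCoeff g = 0) :
    ∀ (k : ℕ) (γ : σ →₀ ℕ), msize γ < k → MvPowerSeries.coeff γ (g ^ k) = 0 := by
  classical
  intro k
  induction k with
  | zero => intro γ h; omega
  | succ k ih =>
    intro γ h
    rw [pow_succ', MvPowerSeries.coeff_mul]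
    apply Finset.sum_eq_zero
    rintro ⟨p, q⟩ hpq
    rw [Finset.HasAntidiagonal.mem_antidiagonal] at hpq
    by_cases hp : p = 0
    · subst hp
      rw [MvPowerSeries.coeff_zero_eq_constantCoeff, h0, zero_mul]
    · have h1 : 1 ≤ msize p := one_le_msize hp
      have h2 : msize p + msize q = msize γ := by rw [← msize_add, hpq]
      have h3 : msize q < k := by omega
      rw [ih q h3, mul_zero]

theorem coeff_prod_pow_zero [Fintype σ] {a : σ → MvPowerSeries τ ℂ}
    (h0 : ∀ s, MvPowerSeries.constantCoeff (a s) = 0) {α : σ →₀ ℕ} {γ : τ →₀ ℕ}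
    (s0 : σ) (hs : msize γ < α s0) :
    MvPowerSeries.coeff γ (∏ s, a s ^ α s) = 0 := by
  classical
  rw [← Finset.mul_prod_erase Finset.univ _ (Finset.mem_univ s0), MvPowerSeries.coeff_mul]
  apply Finset.sum_eq_zero
  rintro ⟨p, q⟩ hpq
  rw [Finset.HasAntidiagonal.mem_antidiagonal] at hpq
  have h2 : msize p + msize q = msize γ := by rw [← msize_add, hpq]
  have hple : msize p < α s0 := by omega
  rw [coeff_pow_zero_of_lt (h0 s0) _ p hple, zero_mul]

theorem coeff_substC_def [Fintype σ] [DecidableEq σ] (a : σ → MvPowerSeries τ ℂ)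
    (f : MvPowerSeries σ ℂ) (γ : τ →₀ ℕ) :
    MvPowerSeries.coeff γ (substC a f) =
      ∑ α ∈ Finset.Iic (cf (σ := σ) (msize γ)),
        MvPowerSeries.coeff α f * MvPowerSeries.coeff γ (∏ s, a s ^ α s) := rfl

theorem coeff_substC [Fintype σ] [DecidableEq σ] {a : σ → MvPowerSeries τ ℂ}
    (h0 : ∀ s, MvPowerSeries.constantCoeff (a s) = 0) (f : MvPowerSeries σ ℂ)
    (γ : τ →₀ ℕ) {U : Finset (σ →₀ ℕ)} (hU : Finset.Iic (cf (σ := σ) (msize γ)) ⊆ U) :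
    MvPowerSeries.coeff γ (substC a f) =
      ∑ α ∈ U, MvPowerSeries.coeff α f * MvPowerSeries.coeff γ (∏ s, a s ^ α s) := by
  rw [coeff_substC_def]
  refine Finset.sum_subset hU ?_
  intro α _ hni
  obtain ⟨s0, hs0⟩ : ∃ s, msize γ < α s := by
    by_contra hc
    push_neg at hc
    exact hni (mem_Iic_cf.2 hc)
  rw [coeff_prod_pow_zero h0 s0 hs0, mul_zero]

theorem coeff_substC_congr [Fintype σ] [DecidableEq σ] {a : σ → MvPowerSeries τ ℂ}
    {f g : MvPowerSeries σ ℂ} {γ : τ →₀ ℕ}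
    (h : ∀ α : σ →₀ ℕ, (∀ s, α s ≤ msize γ) →
      MvPowerSeries.coeff α f = MvPowerSeries.coeff α g) :
    MvPowerSeries.coeff γ (substC a f) = MvPowerSeries.coeff γ (substC a g) := by
  rw [coeff_substC_def, coeff_substC_def]
  refine Finset.sum_congr rfl ?_
  intro α hα
  rw [h α (mem_Iic_cf.1 hα)]

theorem substC_add [Fintype σ] [DecidableEq σ] (a : σ → MvPowerSeries τ ℂ)
    (f g : MvPowerSeries σ ℂ) : substC a (f + g) = substC a f + substC a g := by
  ext γ
  rw [map_add, coeff_substC_def, coeff_substC_def, coeff_substC_def, ← Finset.sum_add_distrib]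
  exact Finset.sum_congr rfl fun α _ => by rw [map_add, add_mul]

theorem substC_zero [Fintype σ] [DecidableEq σ] (a : σ → MvPowerSeries τ ℂ) :
    substC a (0 : MvPowerSeries σ ℂ) = 0 := by
  ext γ
  rw [coeff_substC_def]
  simp

/-- `substC` as an additive monoid hom. -/
def substCAdd [Fintype σ] [DecidableEq σ] (a : σ → MvPowerSeries τ ℂ) :
    MvPowerSeries σ ℂ →+ MvPowerSeries τ ℂ where
  toFun := substC a
  map_zero' := substC_zero a
  map_add' := substC_add a

theorem substC_sum [Fintype σ] [DecidableEq σ] (a : σ → MvPowerSeries τ ℂ)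
    {ι : Type*} (S : Finset ι) (f : ι → MvPowerSeries σ ℂ) :
    substC a (∑ i ∈ S, f i) = ∑ i ∈ S, substC a (f i) :=
  map_sum (substCAdd a) f S

theorem substC_monomial [Fintype σ] [DecidableEq σ] {a : σ → MvPowerSeries τ ℂ}
    (h0 : ∀ s, MvPowerSeries.constantCoeff (a s) = 0) (β : σ →₀ ℕ) (c : ℂ) :
    substC a (MvPowerSeries.monomial β c) = c • ∏ s, a s ^ β s := by
  classical
  ext γ
  rw [coeff_substC h0 _ γ (U := insert β (Finset.Iic (cf (σ := σ) (msize γ))))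
    (Finset.subset_insert _ _)]
  rw [Finset.sum_eq_single_of_mem β (Finset.mem_insert_self _ _)]
  · rw [MvPowerSeries.coeff_monomial_same, LinearMap.map_smul, smul_eq_mul]
  · intro b _ hbβ
    rw [MvPowerSeries.coeff_monomial_ne hbβ, zero_mul]

theorem substC_one [Fintype σ] [DecidableEq σ] {a : σ → MvPowerSeries τ ℂ}
    (h0 : ∀ s, MvPowerSeries.constantCoeff (a s) = 0) :
    substC a (1 : MvPowerSeries σ ℂ) = 1 := by
  rw [← MvPowerSeries.monomial_zero_one, substC_monomial h0]
  simp

theorem constantCoeff_substC [Fintype σ] [DecidableEq σ] (a : σ → MvPowerSeries τ ℂ)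
    (f : MvPowerSeries σ ℂ) :
    MvPowerSeries.constantCoeff (substC a f) = MvPowerSeries.constantCoeff f := by
  classical
  have h1 : Finset.Iic (cf (σ := σ) (msize (0 : τ →₀ ℕ))) = {0} := by
    ext α
    simp only [Finset.mem_singleton, mem_Iic_cf]
    constructor
    · intro h
      ext s
      have := h s
      simp [msize] at this ⊢
      omega
    · intro h s
      simp [h]
  rw [← MvPowerSeries.coeff_zero_eq_constantCoeff, ← MvPowerSeries.coeff_zero_eq_constantCoeff,
    coeff_substC_def, h1, Finset.sum_singleton]
  have : (∏ s, a s ^ (0 : σ →₀ ℕ) s) = 1 := by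
    simp
  rw [this]
  simp [MvPowerSeries.coeff_zero_eq_constantCoeff]

theorem prod_monomial {ι : Type*} (S : Finset ι) (δ : ι → (τ →₀ ℕ)) :
    (∏ s ∈ S, MvPowerSeries.monomial (δ s) (1 : ℂ))
      = MvPowerSeries.monomial (∑ s ∈ S, δ s) 1 := by
  classical
  induction S using Finset.induction with
  | empty => simp [MvPowerSeries.monomial_zero_one]
  | @insert a S ha ih =>
    rw [Finset.prod_insert ha, ih, Finset.sum_insert ha,
      MvPowerSeries.monomial_mul_monomial, one_mul]

theorem sum_single_eq_mapDomain [Fintype σ] [DecidableEq σ] (e : σ → τ) (α : σ →₀ ℕ) :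
    (∑ s : σ, Finsupp.single (e s) (α s)) = Finsupp.mapDomain e α := by
  classical
  rw [Finsupp.mapDomain, Finsupp.sum]
  exact (Finset.sum_subset (Finset.subset_univ _) (fun s _ hs => by
    rw [Finsupp.notMem_support_iff.1 hs, Finsupp.single_zero])).symm

theorem prod_X_pow [Fintype σ] [DecidableEq σ] (e : σ → τ) (α : σ →₀ ℕ) :
    (∏ s, (MvPowerSeries.X (e s) : MvPowerSeries τ ℂ) ^ α s)
      = MvPowerSeries.monomial (Finsupp.mapDomain e α) 1 := by
  classical
  have h1 : ∀ s : σ, (MvPowerSeries.X (e s) : MvPowerSeries τ ℂ) ^ α s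
      = MvPowerSeries.monomial (Finsupp.single (e s) (α s)) 1 := fun s =>
    MvPowerSeries.X_pow_eq _ _
  rw [Finset.prod_congr rfl fun s _ => h1 s, prod_monomial, sum_single_eq_mapDomain]

theorem coeff_substC_rename_eq [Fintype σ] [DecidableEq σ] {e : σ → τ}
    (he : Function.Injective e) (f : MvPowerSeries σ ℂ) (α₀ : σ →₀ ℕ) :
    MvPowerSeries.coeff (Finsupp.mapDomain e α₀)
        (substC (fun s => MvPowerSeries.X (e s)) f) = MvPowerSeries.coeff α₀ f := by
  classical
  rw [coeff_substC_def]
  rw [Finset.sum_eq_single_of_mem α₀ ?mem]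
  · rw [prod_X_pow, MvPowerSeries.coeff_monomial_same, mul_one]
  · intro b _ hb
    rw [prod_X_pow, MvPowerSeries.coeff_monomial_ne, mul_zero]
    exact fun h => hb (Finsupp.mapDomain_injective he h.symm)
  case mem =>
    rw [mem_Iic_cf]
    intro s
    have h1 : α₀ s = (Finsupp.mapDomain e α₀) (e s) := (Finsupp.mapDomain_apply he α₀ s).symm
    rw [h1]
    exact apply_le_msize _ _

theorem coeff_substC_rename_zero [Fintype σ] [DecidableEq σ] (e : σ → τ)
    (f : MvPowerSeries σ ℂ) (γ : τ →₀ ℕ) (hγ : ∀ α : σ →₀ ℕ, Finsupp.mapDomain e α ≠ γ) :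
    MvPowerSeries.coeff γ (substC (fun s => MvPowerSeries.X (e s)) f) = 0 := by
  classical
  rw [coeff_substC_def]
  apply Finset.sum_eq_zero
  intro α _
  rw [prod_X_pow, MvPowerSeries.coeff_monomial_ne (fun h => hγ α h.symm), mul_zero]

theorem coeff_substC_section [Fintype σ] [DecidableEq σ] [Fintype τ] [DecidableEq τ]
    (j : τ → σ) (hj : Function.Injective j) (b : σ → MvPowerSeries τ ℂ)
    (hb1 : ∀ t, b (j t) = MvPowerSeries.X t) (hb0 : ∀ s, s ∉ Set.range j → b s = 0)
    (g : MvPowerSeries σ ℂ) (γ : τ →₀ ℕ) :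
    MvPowerSeries.coeff γ (substC b g) =
      MvPowerSeries.coeff (Finsupp.mapDomain j γ) g := by
  classical
  rw [coeff_substC_def]
  have key : ∀ α : σ →₀ ℕ, MvPowerSeries.coeff γ (∏ s, b s ^ α s)
      = if α = Finsupp.mapDomain j γ then 1 else 0 := by
    intro α
    by_cases hα : ∀ s, s ∉ Set.range j → α s = 0
    · set α' : τ →₀ ℕ := Finsupp.comapDomain j α (Set.injOn_of_injective hj) with hα'def
      have hα'app : ∀ t, α' t = α (j t) := fun t => rfl
      have hmd : Finsupp.mapDomain j α' = α := by
        ext s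
        by_cases hs : s ∈ Set.range j
        · obtain ⟨t, rfl⟩ := hs
          rw [Finsupp.mapDomain_apply hj, hα'app]
        · rw [Finsupp.mapDomain_notin_range _ _ hs, hα s hs]
      have hprod : (∏ s, b s ^ α s) = MvPowerSeries.monomial α' 1 := by
        have h2 : (∏ s, b s ^ α s) = ∏ s ∈ (Finset.univ : Finset τ).image j, b s ^ α s := by
          refine (Finset.prod_subset (Finset.subset_univ _) ?_).symm
          intro s _ hs
          have : s ∉ Set.range j := by
            intro ⟨t, ht⟩
            exact hs (Finset.mem_image.2 ⟨t, Finset.mem_univ t, ht⟩)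
          rw [hα s this, pow_zero]
        rw [h2, Finset.prod_image (fun x _ y _ h => hj h)]
        have h3 : ∀ t : τ, b (j t) ^ α (j t)
            = (MvPowerSeries.X t : MvPowerSeries τ ℂ) ^ α' t := fun t => by
          rw [hb1, hα'app]
        rw [Finset.prod_congr rfl fun t _ => h3 t]
        have := prod_X_pow (τ := τ) (id : τ → τ) α'
        rw [Finsupp.mapDomain_id] at this
        simpa using this
      rw [hprod, MvPowerSeries.coeff_monomial]
      have hiff : γ = α' ↔ α = Finsupp.mapDomain j γ := by
        constructor
        · intro h; rw [← hmd, ← h]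
        · intro h
          ext t
          rw [hα'app, h, Finsupp.mapDomain_apply hj]
      by_cases h : γ = α'
      · rw [if_pos h, if_pos (hiff.1 h)]
      · rw [if_neg h, if_neg (fun hh => h (hiff.2 hh))]
    · push_neg at hα
      obtain ⟨s0, hs0r, hs0⟩ := hα
      have hzero : (∏ s, b s ^ α s) = 0 := by
        rw [← Finset.mul_prod_erase Finset.univ _ (Finset.mem_univ s0), hb0 s0 hs0r,
          zero_pow hs0, zero_mul]
      rw [hzero, map_zero]
      have hne : α ≠ Finsupp.mapDomain j γ := fun h => hs0 (by
        rw [h, Finsupp.mapDomain_notin_range _ _ hs0r])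
      rw [if_neg hne]
  rw [Finset.sum_congr rfl fun α _ => by rw [key α, mul_ite, mul_one, mul_zero]]
  rw [Finset.sum_ite_eq' _ (Finsupp.mapDomain j γ) (fun α => MvPowerSeries.coeff α g)]
  rw [if_pos]
  rw [mem_Iic_cf]
  intro s
  calc (Finsupp.mapDomain j γ) s ≤ msize (Finsupp.mapDomain j γ) := apply_le_msize _ _
    _ = msize γ := msize_mapDomain γ

end Aux2

section Aux3

open Finsupp

theorem msize_single (v : σ) (k : ℕ) : msize (Finsupp.single v k) = k := by
  classical
  simp [msize, Finsupp.sum_single_index]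

/-- Truncation of a power series to a finite set of multi-indices. -/
def truncFun (U : Finset (σ →₀ ℕ)) (f : MvPowerSeries σ ℂ) : MvPowerSeries σ ℂ :=
  ∑ α ∈ U, MvPowerSeries.monomial α (MvPowerSeries.coeff α f)

theorem coeff_truncFun (U : Finset (σ →₀ ℕ)) (f : MvPowerSeries σ ℂ) {α : σ →₀ ℕ}
    (h : α ∈ U) : MvPowerSeries.coeff α (truncFun U f) = MvPowerSeries.coeff α f := by
  classical
  rw [truncFun, map_sum]
  rw [Finset.sum_congr rfl fun β _ => MvPowerSeries.coeff_monomial α β _]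
  rw [Finset.sum_ite_eq _ α (fun β => MvPowerSeries.coeff β f), if_pos h]

theorem pd_mul_monomial (v : σ) (α β : σ →₀ ℕ) (c e : ℂ) :
    pd v (MvPowerSeries.monomial α c * MvPowerSeries.monomial β e)
      = pd v (MvPowerSeries.monomial α c) * MvPowerSeries.monomial β e
        + MvPowerSeries.monomial α c * pd v (MvPowerSeries.monomial β e) := by
  classical
  rw [MvPowerSeries.monomial_mul_monomial, pd_monomial, pd_monomial, pd_monomial,
    MvPowerSeries.monomial_mul_monomial, MvPowerSeries.monomial_mul_monomial]
  have hab : (((α + β) v : ℕ) : ℂ) = (α v : ℂ) + (β v : ℂ) := by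
    rw [Finsupp.add_apply]; push_cast; ring
  rw [hab, add_mul, map_add]
  congr 1
  · by_cases h : α v = 0
    · simp [h]
    · have hle : Finsupp.single v 1 ≤ α := by rw [Finsupp.single_le_iff]; omega
      have hidx : α + β - Finsupp.single v 1 = α - Finsupp.single v 1 + β :=
        (tsub_add_eq_add_tsub hle).symm
      rw [hidx]
      congr 1
      ring
  · by_cases h : β v = 0
    · simp [h]
    · have hle : Finsupp.single v 1 ≤ β := by rw [Finsupp.single_le_iff]; omega
      have hidx : α + β - Finsupp.single v 1 = α + (β - Finsupp.single v 1) :=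
        add_tsub_assoc_of_le hle α
      rw [hidx]
      congr 1
      ring

theorem pd_mul_truncFun (v : σ) (U : Finset (σ →₀ ℕ)) (f g : MvPowerSeries σ ℂ) :
    pd v (truncFun U f * truncFun U g)
      = pd v (truncFun U f) * truncFun U g + truncFun U f * pd v (truncFun U g) := by
  classical
  simp only [truncFun]
  set M : (σ →₀ ℕ) → MvPowerSeries σ ℂ :=
    fun α => MvPowerSeries.monomial α (MvPowerSeries.coeff α f) with hM
  set N : (σ →₀ ℕ) → MvPowerSeries σ ℂ :=
    fun β => MvPowerSeries.monomial β (MvPowerSeries.coeff β g) with hN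
  calc pd v ((∑ α ∈ U, M α) * ∑ β ∈ U, N β)
      = ∑ α ∈ U, ∑ β ∈ U, pd v (M α * N β) := by
        rw [Finset.sum_mul_sum, pd_sum]
        exact Finset.sum_congr rfl fun α _ => pd_sum v U _
    _ = ∑ α ∈ U, ∑ β ∈ U, (pd v (M α) * N β + M α * pd v (N β)) :=
        Finset.sum_congr rfl fun α _ => Finset.sum_congr rfl fun β _ =>
          pd_mul_monomial v α β _ _
    _ = (∑ α ∈ U, ∑ β ∈ U, pd v (M α) * N β) + ∑ α ∈ U, ∑ β ∈ U, M α * pd v (N β) := by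
        rw [← Finset.sum_add_distrib]
        exact Finset.sum_congr rfl fun α _ => Finset.sum_add_distrib
    _ = pd v (∑ α ∈ U, M α) * (∑ β ∈ U, N β) + (∑ α ∈ U, M α) * pd v (∑ β ∈ U, N β) := by
        rw [pd_sum, pd_sum, Finset.sum_mul, Finset.sum_mul]
        congr 1
        · exact Finset.sum_congr rfl fun α _ => by rw [Finset.mul_sum]
        · exact Finset.sum_congr rfl fun α _ => by rw [Finset.mul_sum]

theorem pd_mul (v : σ) (f g : MvPowerSeries σ ℂ) :
    pd v (f * g) = pd v f * g + f * pd v g := by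
  classical
  ext γ
  set U : Finset (σ →₀ ℕ) := Finset.Iic (γ + Finsupp.single v 1) with hUdef
  set p := truncFun U f with hp
  set q := truncFun U g with hq
  have h1 : MvPowerSeries.coeff γ (pd v (f * g)) = MvPowerSeries.coeff γ (pd v (p * q)) := by
    rw [coeff_pd, coeff_pd, MvPowerSeries.coeff_mul, MvPowerSeries.coeff_mul]
    congr 1
    refine Finset.sum_congr rfl ?_
    rintro ⟨u, w⟩ huw
    rw [Finset.HasAntidiagonal.mem_antidiagonal] at huw
    dsimp only at huw ⊢
    have hu : u ∈ U := Finset.mem_Iic.2 (huw ▸ self_le_add_right u w)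
    have hw : w ∈ U := Finset.mem_Iic.2 (huw ▸ self_le_add_left w u)
    rw [coeff_truncFun U f hu, coeff_truncFun U g hw]
  have h2 : MvPowerSeries.coeff γ (pd v f * g + f * pd v g)
      = MvPowerSeries.coeff γ (pd v p * q + p * pd v q) := by
    rw [map_add, map_add, MvPowerSeries.coeff_mul, MvPowerSeries.coeff_mul,
      MvPowerSeries.coeff_mul, MvPowerSeries.coeff_mul]
    congr 1
    · refine Finset.sum_congr rfl ?_
      rintro ⟨u, w⟩ huw
      rw [Finset.HasAntidiagonal.mem_antidiagonal] at huw
      dsimp only at huw ⊢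
      have huγ : u ≤ γ := huw ▸ self_le_add_right u w
      have hwU : w ∈ U := Finset.mem_Iic.2
        (le_trans (huw ▸ self_le_add_left w u) (self_le_add_right γ _))
      have huv : u + Finsupp.single v 1 ∈ U := Finset.mem_Iic.2 (add_le_add_left huγ _)
      rw [coeff_pd, coeff_pd, coeff_truncFun U f huv, coeff_truncFun U g hwU]
    · refine Finset.sum_congr rfl ?_
      rintro ⟨u, w⟩ huw
      rw [Finset.HasAntidiagonal.mem_antidiagonal] at huw
      dsimp only at huw ⊢
      have hwγ : w ≤ γ := huw ▸ self_le_add_left w u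
      have huU : u ∈ U := Finset.mem_Iic.2
        (le_trans (huw ▸ self_le_add_right u w) (self_le_add_right γ _))
      have hwv : w + Finsupp.single v 1 ∈ U := Finset.mem_Iic.2 (add_le_add_left hwγ _)
      rw [coeff_pd, coeff_pd, coeff_truncFun U f huU, coeff_truncFun U g hwv]
  rw [h1, h2, hp, hq, pd_mul_truncFun]

theorem pd_pow (v : σ) (g : MvPowerSeries σ ℂ) (k : ℕ) :
    pd v (g ^ k) = (k : ℂ) • (g ^ (k - 1) * pd v g) := by
  induction k with
  | zero => simp [pd_one]
  | succ k ih =>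
    rw [pow_succ, pd_mul, ih]
    cases k with
    | zero => simp
    | succ m =>
      have h1 : ((m + 1 + 1 : ℕ) : ℂ) = ((m + 1 : ℕ) : ℂ) + 1 := by push_cast; ring
      rw [Nat.add_sub_cancel, Nat.add_sub_cancel, h1, add_smul, one_smul]
      congr 1
      rw [smul_mul_assoc]
      congr 1
      rw [mul_right_comm, ← pow_succ]

theorem pd_prod {ι : Type*} [DecidableEq ι] (v : σ) (S : Finset ι)
    (g : ι → MvPowerSeries σ ℂ) :
    pd v (∏ i ∈ S, g i) = ∑ i ∈ S, (∏ j ∈ S.erase i, g j) * pd v (g i) := by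
  classical
  induction S using Finset.induction with
  | empty => simp [pd_one]
  | @insert a S ha ih =>
    rw [Finset.prod_insert ha, pd_mul, ih, Finset.sum_insert ha, Finset.erase_insert ha,
      Finset.mul_sum]
    rw [mul_comm (pd v (g a)) (∏ j ∈ S, g j)]
    congr 1
    refine Finset.sum_congr rfl ?_
    intro i hi
    have hia : a ≠ i := fun h => ha (h ▸ hi)
    rw [Finset.erase_insert_of_ne hia,
      Finset.prod_insert (fun h => ha (Finset.mem_of_mem_erase h)), mul_assoc]

theorem pd_prod_pow {σ' : Type*} [Fintype σ'] [DecidableEq σ'] (a : σ' → MvPowerSeries σ ℂ)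
    (β : σ' →₀ ℕ) (v : σ) :
    pd v (∏ s, a s ^ β s)
      = ∑ s, (β s : ℂ) •
          ((∏ t, a t ^ (((β - Finsupp.single s 1) : σ' →₀ ℕ) t)) * pd v (a s)) := by
  classical
  rw [pd_prod]
  refine Finset.sum_congr rfl ?_
  intro s _
  rw [pd_pow]
  by_cases h : β s = 0
  · simp [h]
  · have hsplit : (∏ t, a t ^ (((β - Finsupp.single s 1) : σ' →₀ ℕ) t))
        = a s ^ (β s - 1) * ∏ t ∈ Finset.univ.erase s, a t ^ β t := by
      rw [← Finset.mul_prod_erase Finset.univ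
        (fun t => a t ^ (((β - Finsupp.single s 1) : σ' →₀ ℕ) t)) (Finset.mem_univ s)]
      congr 1
      · congr 1
        rw [Finsupp.tsub_apply, Finsupp.single_apply, if_pos rfl]
      · refine Finset.prod_congr rfl ?_
        intro t ht
        have hts : s ≠ t := fun h => (Finset.mem_erase.1 ht).1 h.symm
        rw [Finsupp.tsub_apply, Finsupp.single_apply, if_neg hts, Nat.sub_zero]
    rw [hsplit, mul_smul_comm]
    congr 1
    ring

theorem substC_mul_monomial [Fintype σ] [DecidableEq σ] {a : σ → MvPowerSeries τ ℂ}
    (h0 : ∀ s, MvPowerSeries.constantCoeff (a s) = 0) (α β : σ →₀ ℕ) (c e : ℂ) :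
    substC a (MvPowerSeries.monomial α c * MvPowerSeries.monomial β e)
      = substC a (MvPowerSeries.monomial α c) * substC a (MvPowerSeries.monomial β e) := by
  rw [MvPowerSeries.monomial_mul_monomial, substC_monomial h0, substC_monomial h0,
    substC_monomial h0]
  have hsplit : (∏ s, a s ^ (α + β) s) = (∏ s, a s ^ α s) * ∏ s, a s ^ β s := by
    rw [← Finset.prod_mul_distrib]
    exact Finset.prod_congr rfl fun s _ => by rw [Finsupp.add_apply, pow_add]
  rw [hsplit, smul_mul_assoc, mul_smul_comm, smul_smul]

theorem substC_mul [Fintype σ] [DecidableEq σ] {a : σ → MvPowerSeries τ ℂ}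
    (h0 : ∀ s, MvPowerSeries.constantCoeff (a s) = 0) (f g : MvPowerSeries σ ℂ) :
    substC a (f * g) = substC a f * substC a g := by
  classical
  ext γ
  set U : Finset (σ →₀ ℕ) := Finset.Iic (cf (σ := σ) (msize γ)) with hUdef
  set p := truncFun U f with hp
  set q := truncFun U g with hq
  have hmem : ∀ {α : σ →₀ ℕ}, (∀ s, α s ≤ msize γ) → α ∈ U := fun h => mem_Iic_cf.2 h
  have h1 : MvPowerSeries.coeff γ (substC a (f * g))
      = MvPowerSeries.coeff γ (substC a (p * q)) := by
    apply coeff_substC_congr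
    intro α hα
    rw [MvPowerSeries.coeff_mul, MvPowerSeries.coeff_mul]
    refine Finset.sum_congr rfl ?_
    rintro ⟨u, w⟩ huw
    rw [Finset.HasAntidiagonal.mem_antidiagonal] at huw
    dsimp only at huw ⊢
    have huα : u ≤ α := huw ▸ self_le_add_right u w
    have hwα : w ≤ α := huw ▸ self_le_add_left w u
    have hu : u ∈ U := hmem fun s => le_trans (Finsupp.le_def.1 huα s) (hα s)
    have hw : w ∈ U := hmem fun s => le_trans (Finsupp.le_def.1 hwα s) (hα s)
    rw [coeff_truncFun U f hu, coeff_truncFun U g hw]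
  have h2 : MvPowerSeries.coeff γ (substC a f * substC a g)
      = MvPowerSeries.coeff γ (substC a p * substC a q) := by
    rw [MvPowerSeries.coeff_mul, MvPowerSeries.coeff_mul]
    refine Finset.sum_congr rfl ?_
    rintro ⟨u, w⟩ huw
    rw [Finset.HasAntidiagonal.mem_antidiagonal] at huw
    dsimp only at huw ⊢
    have hms : msize u + msize w = msize γ := by rw [← msize_add, huw]
    congr 1
    · apply coeff_substC_congr
      intro α hα
      exact (coeff_truncFun U f (hmem fun s => by have := hα s; omega)).symm
    · apply coeff_substC_congr
      intro α hα
      exact (coeff_truncFun U g (hmem fun s => by have := hα s; omega)).symm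
  have h3 : substC a (p * q) = substC a p * substC a q := by
    simp only [hp, hq, truncFun]
    rw [Finset.sum_mul_sum, substC_sum]
    rw [Finset.sum_congr rfl fun α (_ : α ∈ U) => substC_sum a U _]
    rw [Finset.sum_congr rfl fun α (_ : α ∈ U) => Finset.sum_congr rfl fun β _ =>
      substC_mul_monomial h0 α β _ _]
    rw [substC_sum, substC_sum, Finset.sum_mul]
    exact Finset.sum_congr rfl fun α _ => by rw [Finset.mul_sum]
  rw [h1, h3]
  exact h2.symm

/-- `substC` as a ring hom, for substitutions with vanishing constant terms. -/
def substCHom [Fintype σ] [DecidableEq σ] (a : σ → MvPowerSeries τ ℂ)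
    (h0 : ∀ s, MvPowerSeries.constantCoeff (a s) = 0) :
    MvPowerSeries σ ℂ →+* MvPowerSeries τ ℂ where
  toFun := substC a
  map_one' := substC_one h0
  map_mul' := substC_mul h0
  map_zero' := substC_zero a
  map_add' := substC_add a

theorem pd_substC_monomial [Fintype σ] [DecidableEq σ] {a : σ → MvPowerSeries τ ℂ}
    (h0 : ∀ s, MvPowerSeries.constantCoeff (a s) = 0) (v : τ) (β : σ →₀ ℕ) (c : ℂ) :
    pd v (substC a (MvPowerSeries.monomial β c))
      = ∑ s, substC a (pd s (MvPowerSeries.monomial β c)) * pd v (a s) := by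
  rw [substC_monomial h0, pd_smul, pd_prod_pow, Finset.smul_sum]
  refine Finset.sum_congr rfl ?_
  intro s _
  rw [pd_monomial, substC_monomial h0, smul_mul_assoc, smul_smul,
    mul_comm c ((β s : ℂ))]

theorem pd_substC [Fintype σ] [DecidableEq σ] {a : σ → MvPowerSeries τ ℂ}
    (h0 : ∀ s, MvPowerSeries.constantCoeff (a s) = 0) (v : τ) (f : MvPowerSeries σ ℂ) :
    pd v (substC a f) = ∑ s, substC a (pd s f) * pd v (a s) := by
  classical
  ext γ
  set U : Finset (σ →₀ ℕ) := Finset.Iic (cf (σ := σ) (msize γ + 1)) with hU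
  set p := truncFun U f with hp
  have hcoe : ∀ α : σ →₀ ℕ, (∀ s, α s ≤ msize γ + 1) →
      MvPowerSeries.coeff α f = MvPowerSeries.coeff α p :=
    fun α hα => (coeff_truncFun U f (mem_Iic_cf.2 hα)).symm
  have hms : msize (γ + Finsupp.single v 1) = msize γ + 1 := by
    rw [msize_add, msize_single]
  have h1 : MvPowerSeries.coeff γ (pd v (substC a f))
      = MvPowerSeries.coeff γ (pd v (substC a p)) := by
    rw [coeff_pd, coeff_pd]
    congr 1
    apply coeff_substC_congr
    intro α hα
    apply hcoe
    intro s
    have h := hα s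
    rw [hms] at h
    exact h
  have h2 : MvPowerSeries.coeff γ (∑ s, substC a (pd s f) * pd v (a s))
      = MvPowerSeries.coeff γ (∑ s, substC a (pd s p) * pd v (a s)) := by
    rw [map_sum, map_sum]
    refine Finset.sum_congr rfl fun s _ => ?_
    rw [MvPowerSeries.coeff_mul, MvPowerSeries.coeff_mul]
    refine Finset.sum_congr rfl ?_
    rintro ⟨u, w⟩ huw
    rw [Finset.HasAntidiagonal.mem_antidiagonal] at huw
    dsimp only at huw ⊢
    congr 1
    apply coeff_substC_congr
    intro α hα
    rw [coeff_pd, coeff_pd]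
    congr 1
    apply hcoe
    intro t
    have h5 : msize u + msize w = msize γ := by rw [← msize_add, huw]
    have h6 : (Finsupp.single s 1) t ≤ 1 := by
      rw [Finsupp.single_apply]; split <;> omega
    have h7 : α t ≤ msize u := hα t
    rw [Finsupp.add_apply]
    omega
  have h3 : pd v (substC a p) = ∑ s, substC a (pd s p) * pd v (a s) := by
    simp only [hp, truncFun]
    rw [substC_sum, pd_sum]
    rw [Finset.sum_congr rfl fun β (_ : β ∈ U) => pd_substC_monomial h0 v β _]
    rw [Finset.sum_comm]
    refine Finset.sum_congr rfl fun s _ => ?_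
    rw [← Finset.sum_mul]
    congr 1
    rw [← substC_sum, ← pd_sum]
  rw [h1, h3]
  exact h2.symm

theorem pd_X [DecidableEq σ] (v u : σ) :
    pd v (MvPowerSeries.X u : MvPowerSeries σ ℂ) = if u = v then 1 else 0 := by
  have hX : (MvPowerSeries.X u : MvPowerSeries σ ℂ)
      = MvPowerSeries.monomial (Finsupp.single u 1) 1 := rfl
  rw [hX, pd_monomial]
  by_cases h : u = v
  · subst h
    rw [if_pos rfl]
    have h1 : Finsupp.single u 1 - Finsupp.single u 1 = (0 : σ →₀ ℕ) := tsub_self _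
    have h2 : (Finsupp.single u 1) u = 1 := Finsupp.single_eq_same
    rw [h1, h2]
    norm_num [MvPowerSeries.monomial_zero_one]
  · rw [if_neg h]
    have h2 : (Finsupp.single u 1) v = 0 := by
      rw [Finsupp.single_apply, if_neg h]
    rw [h2]
    simp

theorem constantCoeff_pd (v : σ) (f : MvPowerSeries σ ℂ) :
    MvPowerSeries.constantCoeff (pd v f)
      = MvPowerSeries.coeff (Finsupp.single v 1) f := by
  rw [← MvPowerSeries.coeff_zero_eq_constantCoeff, coeff_pd]
  simp

end Aux3

section Main

open Finsupp

variable {n d : ℕ}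

/-- The substitution defining `compQ`. -/
def cqs (Q : Fin d → MvPowerSeries (W3 n d) ℂ) : (Fin n ⊕ Fin d) → MvPowerSeries (W3 n d) ℂ :=
  fun w : Fin n ⊕ Fin d => match w with
    | Sum.inl i => MvPowerSeries.X (Sum.inl i)
    | Sum.inr c => Q c

theorem compQ_eq (Q : Fin d → MvPowerSeries (W3 n d) ℂ) (f : MvPowerSeries (Fin n ⊕ Fin d) ℂ) :
    compQ Q f = substC (cqs Q) f := rfl

/-- The embedding `(χ,τ) ↪ (z,χ,τ)` on the `z = 0` coordinate subspace .. actually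
`(z,τ) ↪ (z,χ,τ)`. -/
def varE (n d : ℕ) : (Fin n ⊕ Fin d) → W3 n d :=
  Sum.map id Sum.inr

theorem varE_injective : Function.Injective (varE n d) := by
  intro x y h
  cases x <;> cases y <;> simp [varE, Sum.map] at h <;> simp [h]

/-- The substitution setting `χ = 0` (and renaming `(z,τ)`). -/
def chi0 (n d : ℕ) : W3 n d → MvPowerSeries (Fin n ⊕ Fin d) ℂ :=
  fun v => match v with
    | Sum.inl i => MvPowerSeries.X (Sum.inl i)
    | Sum.inr (Sum.inl _) => 0
    | Sum.inr (Sum.inr c) => MvPowerSeries.X (Sum.inr c)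

theorem chi0_varE (t : Fin n ⊕ Fin d) : chi0 n d (varE n d t) = MvPowerSeries.X t := by
  rcases t with i | c <;> rfl

theorem chi0_notin (s : W3 n d) (hs : s ∉ Set.range (varE n d)) : chi0 n d s = 0 := by
  rcases s with i | (i | c)
  · exact absurd ⟨Sum.inl i, rfl⟩ hs
  · rfl
  · exact absurd ⟨Sum.inr c, rfl⟩ hs

theorem chi0_cc (s : W3 n d) : MvPowerSeries.constantCoeff (chi0 n d s) = 0 := by
  rcases s with i | (i | c)
  · exact MvPowerSeries.constantCoeff_X _
  · exact map_zero _
  · exact MvPowerSeries.constantCoeff_X _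

theorem coeff_chi0 (g : MvPowerSeries (W3 n d) ℂ) (γ : (Fin n ⊕ Fin d) →₀ ℕ) :
    MvPowerSeries.coeff γ (substC (chi0 n d) g)
      = MvPowerSeries.coeff (Finsupp.mapDomain (varE n d) γ) g :=
  coeff_substC_section (varE n d) varE_injective (chi0 n d) chi0_varE chi0_notin g γ

/-- The substitution appearing in the mapping identity. -/
def theta (Q : Fin d → MvPowerSeries (W3 n d) ℂ)
    (H : Fin n ⊕ Fin d → MvPowerSeries (Fin n ⊕ Fin d) ℂ) :
    W3 n d → MvPowerSeries (W3 n d) ℂ :=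
  fun v => match v with
  | Sum.inl i => compQ Q (H (Sum.inl i))
  | Sum.inr v' => barSub H v'

theorem theta_inl (Q : Fin d → MvPowerSeries (W3 n d) ℂ)
    (H : Fin n ⊕ Fin d → MvPowerSeries (Fin n ⊕ Fin d) ℂ) (i : Fin n) :
    theta Q H (Sum.inl i) = compQ Q (H (Sum.inl i)) := rfl

theorem theta_inr (Q : Fin d → MvPowerSeries (W3 n d) ℂ)
    (H : Fin n ⊕ Fin d → MvPowerSeries (Fin n ⊕ Fin d) ℂ) (v' : Fin n ⊕ Fin d) :
    theta Q H (Sum.inr v') = barSub H v' := rfl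


end Main

-- STATEMENT 5
theorem stmt_5 (n d : ℕ) (hn : 1 ≤ n) (hd : 1 ≤ d)
    (Q Q' : Fin d → MvPowerSeries (W3 n d) ℂ)
    (hQ : IsDefSeries Q) (hQ' : IsDefSeries Q')
    (H : Fin n ⊕ Fin d → MvPowerSeries (Fin n ⊕ Fin d) ℂ)
    (hH0 : ∀ c, MvPowerSeries.constantCoeff (H c) = 0)
    (hsend : Sends Q Q' H) (hjac : jacDet H ≠ 0) :
    Dser Q H ≠ 0 := by
  classical
  intro hD
  -- pointwise normality conditions
  have hn1 : ∀ (c : Fin d) (γ : (Fin n ⊕ Fin d) →₀ ℕ),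
      MvPowerSeries.coeff (Finsupp.mapDomain (Sum.inr : Fin n ⊕ Fin d → W3 n d) γ) (Q c)
        = MvPowerSeries.coeff γ
            (MvPowerSeries.X (Sum.inr c) : MvPowerSeries (Fin n ⊕ Fin d) ℂ) := by
    intro c γ
    have h := congrFun (hQ.normal1 c) γ
    simp only [dAt0] at h
    rw [dpow_zero_eq] at h
    exact h
  have hn2 : ∀ (c : Fin d) (γ : (Fin n ⊕ Fin d) →₀ ℕ),
      MvPowerSeries.coeff (Finsupp.mapDomain (varE n d) γ) (Q c)
        = MvPowerSeries.coeff γ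
            (MvPowerSeries.X (Sum.inr c) : MvPowerSeries (Fin n ⊕ Fin d) ℂ) := by
    intro c γ
    have h := congrFun (hQ.normal2 c) γ
    simp only [dAt0] at h
    rw [dpow_zero_eq] at h
    exact h
  have hQ0 : ∀ c, MvPowerSeries.constantCoeff (Q c) = 0 := by
    intro c
    have h := hn1 c 0
    rw [Finsupp.mapDomain_zero] at h
    rw [← MvPowerSeries.coeff_zero_eq_constantCoeff, h,
      MvPowerSeries.coeff_zero_eq_constantCoeff, MvPowerSeries.constantCoeff_X]
  have hcq0 : ∀ w, MvPowerSeries.constantCoeff (cqs Q w) = 0 := by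
    rintro (i | c)
    · exact MvPowerSeries.constantCoeff_X _
    · exact hQ0 c
  -- facts about barSub
  have hbarEq : ∀ v' : Fin n ⊕ Fin d, barSub H v'
      = substC (fun s : Fin n ⊕ Fin d =>
          MvPowerSeries.X ((Sum.inr : (Fin n ⊕ Fin d) → W3 n d) s)) (sconj (H v')) :=
    fun _ => rfl
  have hbar0 : ∀ v', MvPowerSeries.constantCoeff (barSub H v') = 0 := by
    intro v'
    rw [hbarEq, constantCoeff_substC, coeff_zero_sconj, hH0, map_zero]
  have hbarpd : ∀ (v' : Fin n ⊕ Fin d) (jj : Fin n),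
      pd (Sum.inl jj : W3 n d) (barSub H v') = 0 := by
    intro v' jj
    ext γ
    have hne : ∀ α : (Fin n ⊕ Fin d) →₀ ℕ,
        Finsupp.mapDomain (Sum.inr : (Fin n ⊕ Fin d) → W3 n d) α
          ≠ γ + Finsupp.single (Sum.inl jj : W3 n d) 1 := by
      intro α h
      have h2 := congrArg (fun δ : (W3 n d) →₀ ℕ => δ (Sum.inl jj)) h
      rw [Finsupp.mapDomain_notin_range _ _ (by rintro ⟨x, hx⟩; exact Sum.inr_ne_inl hx)] at h2
      rw [Finsupp.add_apply, Finsupp.single_eq_same] at h2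
      omega
    rw [coeff_pd, hbarEq, map_zero, coeff_substC_rename_zero _ _ _ hne, mul_zero]
  have hθ0 : ∀ v, MvPowerSeries.constantCoeff (theta Q H v) = 0 := by
    rintro (i | v')
    · rw [theta_inl, compQ_eq, constantCoeff_substC]
      exact hH0 _
    · rw [theta_inr]
      exact hbar0 v'
  have hsend' : ∀ r, substC (theta Q H) (Q' r) = compQ Q (H (Sum.inr r)) := hsend
  -- the key identity coming from the mapping equation
  have star : ∀ (r : Fin d) (jj : Fin n),
      pd (Sum.inl jj : W3 n d) (compQ Q (H (Sum.inr r)))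
        = ∑ i : Fin n, substC (theta Q H) (pd (Sum.inl i : W3 n d) (Q' r))
            * pd (Sum.inl jj : W3 n d) (compQ Q (H (Sum.inl i))) := by
    intro r jj
    rw [← hsend' r, pd_substC hθ0]
    rw [Fintype.sum_sum_type]
    have hz : ∀ v' : Fin n ⊕ Fin d,
        substC (theta Q H) (pd (Sum.inr v' : W3 n d) (Q' r))
          * pd (Sum.inl jj : W3 n d) (theta Q H (Sum.inr v')) = 0 := by
      intro v'
      rw [theta_inr, hbarpd v' jj, mul_zero]
    rw [Finset.sum_congr rfl fun v' _ => hz v', Finset.sum_const_zero, add_zero]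
    exact Finset.sum_congr rfl fun i _ => by rw [theta_inl]
  -- the left inverse of substitution by (z, Q)
  have hsetX : ∀ w : Fin n ⊕ Fin d, substC (chi0 n d) (cqs Q w)
      = MvPowerSeries.X w := by
    rintro (i | c)
    · ext δ
      rw [show cqs Q (Sum.inl i)
          = (MvPowerSeries.X (Sum.inl i) : MvPowerSeries (W3 n d) ℂ) from rfl]
      rw [coeff_chi0, MvPowerSeries.coeff_X, MvPowerSeries.coeff_X]
      have hs : (Finsupp.single (Sum.inl i : W3 n d) 1)
          = Finsupp.mapDomain (varE n d) (Finsupp.single (Sum.inl i : Fin n ⊕ Fin d) 1) := by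
        rw [Finsupp.mapDomain_single]
        rfl
      rw [hs]
      exact if_congr ⟨fun h => Finsupp.mapDomain_injective varE_injective h,
        fun h => by rw [h]⟩ rfl rfl
    · ext δ
      rw [show cqs Q (Sum.inr c) = Q c from rfl, coeff_chi0]
      exact hn2 c δ
  have hleft : ∀ g : MvPowerSeries (Fin n ⊕ Fin d) ℂ,
      substC (chi0 n d) (substC (cqs Q) g) = g := by
    intro g
    ext γ
    rw [coeff_chi0]
    rw [coeff_substC hcq0 g _ (U := Finset.Iic (cf (σ := Fin n ⊕ Fin d) (msize γ)))
      (by rw [msize_mapDomain])]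
    have hprod : ∀ α : (Fin n ⊕ Fin d) →₀ ℕ,
        MvPowerSeries.coeff (Finsupp.mapDomain (varE n d) γ) (∏ w, cqs Q w ^ α w)
          = (if γ = α then 1 else 0) := by
      intro α
      rw [← coeff_chi0]
      have hmp : substC (chi0 n d) (∏ w, cqs Q w ^ α w)
          = ∏ w, substC (chi0 n d) (cqs Q w ^ α w) :=
        map_prod (substCHom (chi0 n d) chi0_cc) _ Finset.univ
      have hpow : ∀ w : Fin n ⊕ Fin d, substC (chi0 n d) (cqs Q w ^ α w)
          = (MvPowerSeries.X w : MvPowerSeries (Fin n ⊕ Fin d) ℂ) ^ α w := by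
        intro w
        have h := map_pow (substCHom (chi0 n d) chi0_cc) (cqs Q w) (α w)
        rw [show ((substCHom (chi0 n d) chi0_cc) (cqs Q w))
            = MvPowerSeries.X w from hsetX w] at h
        exact h
      rw [hmp, Finset.prod_congr rfl fun w _ => hpow w]
      have h2 := prod_X_pow (σ := Fin n ⊕ Fin d) (τ := Fin n ⊕ Fin d) id α
      rw [Finsupp.mapDomain_id] at h2
      have h3 : (∏ w, (MvPowerSeries.X w : MvPowerSeries (Fin n ⊕ Fin d) ℂ) ^ α w)
          = MvPowerSeries.monomial α 1 := by
        rw [← h2]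
        rfl
      rw [h3, MvPowerSeries.coeff_monomial]
    rw [Finset.sum_congr rfl fun α _ => by rw [hprod α, mul_ite, mul_one, mul_zero]]
    rw [Finset.sum_ite_eq _ γ (fun α => MvPowerSeries.coeff α g)]
    rw [if_pos (mem_Iic_cf.2 fun s => apply_le_msize γ s)]
  have hinj : substC (cqs Q) (jacDet H) ≠ 0 := by
    intro hzero
    apply hjac
    have h := hleft (jacDet H)
    rw [hzero, substC_zero] at h
    exact h.symm
  -- matrices
  set Pmat : Matrix (Fin n) (Fin n) (MvPowerSeries (W3 n d) ℂ) :=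
    Matrix.of fun i l : Fin n => pd (Sum.inl l) (compQ Q (H (Sum.inl i))) with hPm
  set Lmat : Matrix (Fin d) (Fin n) (MvPowerSeries (W3 n d) ℂ) :=
    Matrix.of fun r i => substC (theta Q H) (pd (Sum.inl i : W3 n d) (Q' r)) with hLm
  set Amat : Matrix (Fin n ⊕ Fin d) (Fin n ⊕ Fin d) (MvPowerSeries (W3 n d) ℂ) :=
    Matrix.of fun k e => pd (varE n d e) (compQ Q (H k)) with hAm
  set Bmat : Matrix (Fin n ⊕ Fin d) (Fin n ⊕ Fin d) (MvPowerSeries (W3 n d) ℂ) :=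
    Matrix.of fun k w => substC (cqs Q) (pd w (H k)) with hBm
  set Jmat : Matrix (Fin n ⊕ Fin d) (Fin n ⊕ Fin d) (MvPowerSeries (W3 n d) ℂ) :=
    Matrix.of fun w e => pd (varE n d e) (cqs Q w) with hJm
  set Qtau : Matrix (Fin d) (Fin d) (MvPowerSeries (W3 n d) ℂ) :=
    Matrix.of fun c c' => pd (Sum.inr (Sum.inr c') : W3 n d) (Q c) with hQt
  set Qzm : Matrix (Fin d) (Fin n) (MvPowerSeries (W3 n d) ℂ) :=
    Matrix.of fun c l => pd (Sum.inl l : W3 n d) (Q c) with hQzm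
  have hABJ : Amat = Bmat * Jmat := by
    refine Matrix.ext fun k e => ?_
    rw [Matrix.mul_apply]
    exact pd_substC hcq0 (varE n d e) (H k)
  have hJblocks : Jmat = Matrix.fromBlocks 1 0 Qzm Qtau := by
    refine Matrix.ext fun w e => ?_
    rcases w with i | c <;> rcases e with l | c'
    · show pd (Sum.inl l : W3 n d) (MvPowerSeries.X (Sum.inl i))
        = (1 : Matrix (Fin n) (Fin n) (MvPowerSeries (W3 n d) ℂ)) i l
      rw [pd_X, Matrix.one_apply]
      exact if_congr (by simp) rfl rfl
    · show pd (Sum.inr (Sum.inr c') : W3 n d) (MvPowerSeries.X (Sum.inl i))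
        = (0 : Matrix (Fin n) (Fin d) (MvPowerSeries (W3 n d) ℂ)) i c'
      rw [pd_X, if_neg (by simp)]
      rfl
    · rfl
    · rfl
  have hdetJ : Jmat.det = Qtau.det := by
    rw [hJblocks, Matrix.det_fromBlocks_zero₁₂, Matrix.det_one, one_mul]
  have hccQt : (MvPowerSeries.constantCoeff).mapMatrix Qtau
      = (1 : Matrix (Fin d) (Fin d) ℂ) := by
    ext c c'
    show MvPowerSeries.constantCoeff
      (pd (Sum.inr (Sum.inr c') : W3 n d) (Q c)) = _
    rw [constantCoeff_pd]
    have h := hn1 c (Finsupp.single (Sum.inr c' : Fin n ⊕ Fin d) 1)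
    rw [Finsupp.mapDomain_single] at h
    rw [h, MvPowerSeries.coeff_X, Matrix.one_apply]
    refine if_congr ?_ rfl rfl
    rw [Finsupp.single_left_inj (one_ne_zero)]
    exact ⟨fun hh => (Sum.inr_injective hh).symm, fun hh => by rw [hh]⟩
  have hQtne : Qtau.det ≠ 0 := by
    intro h
    have h1 : MvPowerSeries.constantCoeff Qtau.det = 1 := by
      rw [RingHom.map_det, hccQt, Matrix.det_one]
    rw [h, map_zero] at h1
    exact one_ne_zero h1.symm
  have hdetB : Bmat.det = substC (cqs Q) (jacDet H) := by
    have hBm2 : Bmat = (substCHom (cqs Q) hcq0).mapMatrix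
        (Matrix.of fun k l => pd l (H k)) := rfl
    rw [hBm2, ← RingHom.map_det]
    rfl
  have hdetAne : Amat.det ≠ 0 := by
    rw [hABJ, Matrix.det_mul, hdetB, hdetJ]
    exact mul_ne_zero hinj hQtne
  have hPdet : Pmat.det = 0 := hD
  set Tm : Matrix (Fin d) (Fin d) (MvPowerSeries (W3 n d) ℂ) :=
    Matrix.of fun r c => Amat (Sum.inr r) (Sum.inr c) with hTm
  set Rm : Matrix (Fin n) (Fin d) (MvPowerSeries (W3 n d) ℂ) :=
    Matrix.of fun i c => Amat (Sum.inl i) (Sum.inr c) with hRm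
  have hAblocks : Amat = Matrix.fromBlocks Pmat Rm (Lmat * Pmat) Tm := by
    refine Matrix.ext fun k e => ?_
    rcases k with i | r <;> rcases e with l | c
    · rfl
    · rfl
    · show Amat (Sum.inr r) (Sum.inl l) = (Lmat * Pmat) r l
      rw [Matrix.mul_apply]
      exact star r l
    · rfl
  have hfact : Amat = Matrix.fromBlocks 1 0 Lmat 1
      * Matrix.fromBlocks Pmat Rm 0 (Tm - Lmat * Rm) := by
    rw [Matrix.fromBlocks_multiply]
    simp only [Matrix.one_mul, Matrix.zero_mul, Matrix.mul_zero, add_zero, zero_add]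
    rw [show Lmat * Rm + (Tm - Lmat * Rm) = Tm from by abel]
    exact hAblocks
  have hdetA0 : Amat.det = 0 := by
    rw [hfact, Matrix.det_mul, Matrix.det_fromBlocks_zero₂₁, hPdet, zero_mul, mul_zero]
  exact hdetAne hdetA0


end Paper
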